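/- arXiv:1312.3705 — 4 statements merged into one kernel-verified Lean document; each statement's English description precedes it below -/
import Mathlib

section
/- Let ξ ∈ ℂ× be such that ξ⁴ is a primitive N-th root of unity (N ≥ 1), and set λ_k = −(ξ^{2k+2} + ξ^{−2k−2}). If 1 ≤ k ≤ N−1, then λ_{2k} = λ_0 if and only if k = N−1. -/
theorem lambda_two_k_eq_lambda_zero_iff (ξ : ℂ) (hξ : ξ ≠ 0) (N : ℕ) (hN : 1 ≤ N)
    (hprim : IsPrimitiveRoot (ξ ^ 4) N) (k : ℕ) (hk1 : 1 ≤ k) (hk2 : k ≤ N - 1) :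
    (-(ξ ^ (2 * (2 * k) + 2) + ξ⁻¹ ^ (2 * (2 * k) + 2)) = -(ξ ^ 2 + ξ⁻¹ ^ 2)) ↔ k = N - 1 := by
  have hinv : ξ * ξ⁻¹ = 1 := mul_inv_cancel₀ hξ
  have hq : ξ ^ 4 * ξ⁻¹ ^ 4 = 1 := by rw [← mul_pow, hinv, one_pow]
  have h2 : ξ ^ 2 * ξ⁻¹ ^ 2 = 1 := by rw [← mul_pow, hinv, one_pow]
  have hpow : (ξ ^ 4) ^ k * (ξ⁻¹ ^ 4) ^ k = 1 := by rw [← mul_pow, hq, one_pow]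
  have e1 : ξ ^ (2 * (2 * k) + 2) = (ξ ^ 4) ^ k * ξ ^ 2 := by
    rw [← pow_mul, ← pow_add]; ring_nf
  have e2 : ξ⁻¹ ^ (2 * (2 * k) + 2) = (ξ⁻¹ ^ 4) ^ k * ξ⁻¹ ^ 2 := by
    rw [← pow_mul, ← pow_add]; ring_nf
  constructor
  · intro h
    rw [e1, e2, neg_inj] at h
    have hfac : ((ξ ^ 4) ^ (k + 1) - 1) * ((ξ ^ 4) ^ k - 1) = 0 := by
      linear_combination ((ξ ^ 4) ^ k * ξ ^ 2) * h - hpow +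
        ((ξ ^ 4) ^ k - (ξ ^ 4) ^ k * (ξ⁻¹ ^ 4) ^ k) * h2
    rcases mul_eq_zero.mp hfac with hc | hc
    · have hone : (ξ ^ 4) ^ (k + 1) = 1 := sub_eq_zero.mp hc
      have hdvd : N ∣ k + 1 := (hprim.pow_eq_one_iff_dvd _).mp hone
      have hle : k + 1 ≤ N := by omega
      have := Nat.le_of_dvd (by omega) hdvd
      omega
    · exfalso
      have hone : (ξ ^ 4) ^ k = 1 := sub_eq_zero.mp hc
      have hdvd : N ∣ k := (hprim.pow_eq_one_iff_dvd _).mp hone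
      have := Nat.le_of_dvd (by omega) hdvd
      omega
  · intro h
    have hk : k + 1 = N := by omega
    have hq1 : (ξ ^ 4) ^ (k + 1) = 1 := by rw [hk]; exact hprim.pow_eq_one
    rw [pow_succ] at hq1
    have hA : (ξ ^ 4) ^ k = ξ⁻¹ ^ 4 := by
      rw [inv_pow]
      exact eq_inv_of_mul_eq_one_left hq1
    have hB : (ξ⁻¹ ^ 4) ^ k = ξ ^ 4 := by
      have := hpow
      rw [hA] at this
      field_simp at this ⊢
      linear_combination this
    rw [e1, e2, hA, hB, neg_inj]
    field_simp
    ring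
end

section
/- Let ξ ∈ ℂ× be such that ξ⁴ is a primitive N-th root of unity, and set λ_k = −(ξ^{2k+2} + ξ^{−2k−2}). If 1 ≤ k ≤ N−1 and λ_k = ξ^{2N}·λ_0, then k = N−2. -/
theorem lambda_k_eq_xi_pow_mul_lambda_zero (ξ : ℂ) (hξ : ξ ≠ 0) (N : ℕ)
    (hprim : IsPrimitiveRoot (ξ ^ 4) N) (k : ℕ) (hk1 : 1 ≤ k) (hk2 : k ≤ N - 1)
    (h : -(ξ ^ (2 * k + 2) + ξ⁻¹ ^ (2 * k + 2)) = ξ ^ (2 * N) * -(ξ ^ 2 + ξ⁻¹ ^ 2)) :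
    k = N - 2 := by
  have hN2 : 2 ≤ N := by omega
  have hpow : ∀ m : ℕ, ξ ^ m * ξ⁻¹ ^ m = 1 := fun m => by
    rw [← mul_pow, mul_inv_cancel₀ hξ, one_pow]
  have hN4 : ξ ^ (4 * N) = 1 := by
    have := hprim.pow_eq_one
    rwa [← pow_mul] at this
  have h1 := hpow (2 * k + 2)
  have h2 := hpow 2
  have e1 : ξ ^ (4 * k + 4) + 1 = ξ ^ (2 * N + 2 * k + 4) + ξ ^ (2 * N + 2 * k) := by
    linear_combination (-(ξ ^ (2 * k + 2))) * h - h1 + ξ ^ (2 * N + 2 * k) * h2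
  have key : (ξ ^ (2 * k + 2) - ξ ^ (2 * N + 2)) * (ξ ^ (2 * k + 4) - ξ ^ (2 * N)) = 0 := by
    linear_combination ξ ^ 2 * e1 + ξ ^ 2 * hN4
  rcases mul_eq_zero.mp key with hA | hB
  · -- ξ^(2k+2) = ξ^(2N+2) : impossible
    have hA' : ξ ^ (2 * k + 2) = ξ ^ (2 * N + 2) := sub_eq_zero.mp hA
    have hsq : ξ ^ (4 * (k + 1)) = ξ ^ (4 * (N + 1)) := by
      rw [show 4 * (k + 1) = (2 * k + 2) * 2 from by ring,
        show 4 * (N + 1) = (2 * N + 2) * 2 from by ring, pow_mul, pow_mul, hA']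
    have hk0 : (ξ ^ 4) ^ k = 1 := by
      have h4 : (ξ ^ 4) ^ (k + 1) = (ξ ^ 4) ^ (N + 1) := by
        rw [← pow_mul, ← pow_mul, hsq]
      have hNe : (ξ ^ 4) ^ (N + 1) = ξ ^ 4 := by
        rw [pow_succ, hprim.pow_eq_one, one_mul]
      have h5 : (ξ ^ 4) ^ k * ξ ^ 4 = ξ ^ 4 := by
        rw [← pow_succ, h4, hNe]
      have hx4 : (ξ : ℂ) ^ 4 ≠ 0 := pow_ne_zero _ hξ
      field_simp at h5
      exact h5
    have := (hprim.pow_eq_one_iff_dvd k).mp hk0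
    obtain ⟨m, hm⟩ := this
    rcases m with _ | m
    · omega
    · have : N * (m + 1) ≥ N * 1 := Nat.mul_le_mul_left N (by omega)
      omega
  · have hB' : ξ ^ (2 * k + 4) = ξ ^ (2 * N) := sub_eq_zero.mp hB
    have hk0 : (ξ ^ 4) ^ (k + 2) = 1 := by
      rw [← pow_mul]
      rw [show 4 * (k + 2) = (2 * k + 4) * 2 from by ring, pow_mul, hB', ← pow_mul,
        show 2 * N * 2 = 4 * N from by ring, hN4]
    have := (hprim.pow_eq_one_iff_dvd (k + 2)).mp hk0
    obtain ⟨m, hm⟩ := this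
    rcases m with _ | _ | m
    · omega
    · omega
    · have : N * (m + 1 + 1) ≥ N * 2 := Nat.mul_le_mul_left N (by omega)
      omega
end

section
/- Let ξ ∈ ℂ× be such that ξ⁴ is a primitive N-th root of unity. Then ξ^{2N²+2N} = (−1)^{N+1}. -/
theorem xi_pow_identity (ξ : ℂ) (hξ : ξ ≠ 0) (N : ℕ) (hN : 1 ≤ N)
    (hprim : IsPrimitiveRoot (ξ ^ 4) N) :
    ξ ^ (2 * N ^ 2 + 2 * N) = (-1 : ℂ) ^ (N + 1) := by
  set ε : ℂ := ξ ^ (2 * N) with hε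
  have hsq : ε * ε = 1 := by
    rw [hε, ← pow_add]
    have : 2 * N + 2 * N = 4 * N := by ring
    rw [this, pow_mul]
    exact hprim.pow_eq_one
  have hkey : ξ ^ (2 * N ^ 2 + 2 * N) = ε ^ (N + 1) := by
    rw [hε, ← pow_mul]
    congr 1
    ring
  rcases mul_self_eq_one_iff.mp hsq with h1 | h1
  · -- ε = 1 forces N odd
    rcases Nat.even_or_odd N with he | ho
    · exfalso
      obtain ⟨m, hm⟩ := he
      have hm' : N = 2 * m := by omega
      have hmlt : m < N := by omega
      have hmpos : 0 < m := by omega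
      have : (ξ ^ 4) ^ m = 1 := by
        rw [← pow_mul]
        have : 4 * m = 2 * N := by omega
        rw [this, ← hε, h1]
      have hdvd := hprim.dvd_of_pow_eq_one m this
      have := Nat.le_of_dvd hmpos hdvd
      omega
    · rw [hkey, h1, one_pow, Even.neg_one_pow (by rcases ho with ⟨k,hk⟩; exact ⟨k+1, by omega⟩)]
  · rw [hkey, h1]
end

section
/- Let ξ be a complex number with ξ² a primitive N-th root of unity, and let p(z) = Σ_{j=0}^{k} c_j T_j(z) with c_k ≠ 0, k ≥ 1. If for every j, c_j = 0 or ξ^{2j} = 1, then N divides k and p ∈ ℂ[T_N], i.e. p is a polynomial in T_N(z). -/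
open Polynomial

/-- Chebyshev polynomial of the first kind, normalized by `T 0 = 2`, `T 1 = X`. -/
noncomputable def chebT (R : Type*) [CommRing R] : ℕ → Polynomial R
  | 0 => 2
  | 1 => X
  | (n + 2) => X * chebT R (n + 1) - chebT R n

/-- Chebyshev polynomial of the second kind, `S 0 = 1`, `S 1 = X`. -/
noncomputable def chebS (R : Type*) [CommRing R] : ℕ → Polynomial R
  | 0 => 1
  | 1 => X
  | (n + 2) => X * chebS R (n + 1) - chebS R n

lemma chebT_eq_dickson (R : Type*) [CommRing R] (n : ℕ) :
    chebT R n = Polynomial.dickson 1 1 n := by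
  induction n using Nat.strong_induction_on with
  | _ n ih =>
    match n with
    | 0 => simp [chebT, Polynomial.dickson]; ring
    | 1 => simp [chebT, Polynomial.dickson]
    | (m + 2) =>
      rw [chebT, Polynomial.dickson, ih (m+1) (by omega), ih m (by omega)]
      simp [map_one]

theorem central_polynomial_in_chebTN (ξ : ℂ) (hξ : ξ ≠ 0) (N : ℕ)
    (hprim : IsPrimitiveRoot (ξ ^ 2) N) (k : ℕ) (hk : 1 ≤ k) (c : ℕ → ℂ) (hck : c k ≠ 0)
    (h : ∀ j ≤ k, c j = 0 ∨ ξ ^ (2 * j) = 1) :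
    N ∣ k ∧
      (∑ j ∈ Finset.range (k + 1), C (c j) * chebT ℂ j) ∈
        (Polynomial.aeval (chebT ℂ N) : Polynomial ℂ →ₐ[ℂ] Polynomial ℂ).range := by
  have hdvd : ∀ j ≤ k, c j ≠ 0 → N ∣ j := by
    intro j hj hcj
    rcases h j hj with h0 | h1
    · exact absurd h0 hcj
    · exact hprim.dvd_of_pow_eq_one j (by rw [← h1, pow_mul])
  refine ⟨hdvd k le_rfl hck, ?_⟩
  apply Subalgebra.sum_mem
  intro j hj
  rcases eq_or_ne (c j) 0 with h0 | h0
  · exact ⟨0, by simp [h0]⟩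
  · obtain ⟨m, rfl⟩ := hdvd j (Finset.mem_range_succ_iff.mp hj) h0
    refine ⟨C (c (N * m)) * chebT ℂ m, ?_⟩
    show (aeval (chebT ℂ N)) (C (c (N * m)) * chebT ℂ m) = _
    rw [← comp_eq_aeval, mul_comp, C_comp, chebT_eq_dickson, chebT_eq_dickson,
      chebT_eq_dickson, ← dickson_one_one_mul, mul_comm m N]
end
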